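/- The Legendre–Fenchel-type transform Û(π,ξ) := sup_{x > x̲, s > s̲} [U(x,s) − xπ − sξ] of the Stone–Geary utility U(x,s) = ((x−x̲)^{1−β}(s−s̲)^β)^{1−γ}/(1−γ) equals −x̲π − s̲ξ + (1/γ̂)((π/(1−β))^{1−β}(ξ/β)^β)^{−γ̂}, where γ̂ = (1−γ)/γ, for all π, ξ > 0. -/

import Mathlib

open Real

/-- The Legendre–Fenchel-type transform
`Û(pp,ξ) := sup_{x > x̲, s > s̲} [U(x,s) − xpp − sξ]` of the Stone–Geary utility
`U(x,s) = ((x−x̲)^{1−β}(s−s̲)^β)^{1−γ}/(1−γ)` equals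
`−x̲pp − s̲ξ + (1/γ̂)((pp/(1−β))^{1−β}(ξ/β)^β)^{−γ̂}` with `γ̂ = (1−γ)/γ`,
for all `pp, ξ > 0`. -/
theorem stone_geary_legendre_transform (β γ xbar sbar pp ξ : ℝ)
    (hβ0 : 0 < β) (hβ1 : β < 1) (hγ : 1 < γ)
    (hx : 0 < xbar) (hs : 0 < sbar) (hpp : 0 < pp) (hξ : 0 < ξ) :
    IsLUB {v : ℝ | ∃ x s : ℝ, xbar < x ∧ sbar < s ∧
        v = ((x - xbar) ^ (1 - β) * (s - sbar) ^ β) ^ (1 - γ) / (1 - γ)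
            - x * pp - s * ξ}
      (-xbar * pp - sbar * ξ +
        (1 / ((1 - γ) / γ)) *
          ((pp / (1 - β)) ^ (1 - β) * (ξ / β) ^ β) ^ (-((1 - γ) / γ))) := by
  have hβ' : (0:ℝ) < 1 - β := by linarith
  have hγ0 : (0:ℝ) < γ := by linarith
  have hγ1 : (0:ℝ) < γ - 1 := by linarith
  have hγn : 1 - γ < 0 := by linarith
  have hγne : (1:ℝ) - γ ≠ 0 := ne_of_lt hγn
  -- rewrite the target constant
  have hexp : -((1 - γ) / γ) = (γ - 1) / γ := by ring
  have hcoef : 1 / ((1 - γ) / γ) = γ / (1 - γ) := one_div_div _ _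
  rw [hexp, hcoef]
  set K : ℝ := (pp / (1 - β)) ^ (1 - β) * (ξ / β) ^ β with hKdef
  have hK : 0 < K := mul_pos (rpow_pos_of_pos (div_pos hpp hβ') _)
    (rpow_pos_of_pos (div_pos hξ hβ0) _)
  set t : ℝ := K ^ ((γ - 1) / γ) with htdef
  have ht : 0 < t := rpow_pos_of_pos hK _
  -- Step 2 (one-variable): for u > 0, u^(1-γ)/(1-γ) - K*u ≤ γ/(1-γ) * t
  have step2 : ∀ u : ℝ, 0 < u → u ^ (1 - γ) / (1 - γ) - K * u ≤ γ / (1 - γ) * t := by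
    intro u hu
    have amgm := Real.geom_mean_le_arith_mean2_weighted
      (w₁ := 1 / γ) (w₂ := (γ - 1) / γ) (p₁ := u ^ (1 - γ)) (p₂ := K * u)
      (by positivity) (by positivity) (by positivity) (by positivity)
      (by rw [← add_div, show (1:ℝ) + (γ - 1) = γ by ring,
            div_self hγ0.ne'])
    have hlhs : (u ^ (1 - γ)) ^ (1 / γ) * (K * u) ^ ((γ - 1) / γ) = t := by
      rw [← Real.rpow_mul hu.le, Real.mul_rpow hK.le hu.le, htdef]
      rw [show (1 - γ) * (1 / γ) = (1 - γ) / γ by ring]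
      rw [mul_comm (K ^ ((γ - 1) / γ)) _, ← mul_assoc, ← Real.rpow_add hu]
      rw [show (1 - γ) / γ + (γ - 1) / γ = 0 by ring, Real.rpow_zero, one_mul]
    rw [hlhs] at amgm
    have h2 : γ * t ≤ u ^ (1 - γ) + (γ - 1) * (K * u) := by
      have h3 := mul_le_mul_of_nonneg_left amgm hγ0.le
      calc γ * t ≤ γ * (1 / γ * u ^ (1 - γ) + (γ - 1) / γ * (K * u)) := h3
        _ = u ^ (1 - γ) + (γ - 1) * (K * u) := by field_simp [hγ0.ne']
    have e1 : u ^ (1 - γ) / (1 - γ) - K * u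
        = (u ^ (1 - γ) + (γ - 1) * (K * u)) / (1 - γ) := by
      field_simp
      ring
    have e2 : γ / (1 - γ) * t = (γ * t) / (1 - γ) := by ring
    rw [e1, e2, div_le_div_right_of_neg hγn]
    exact h2
  constructor
  · -- upper bound
    rintro v ⟨x, s, hxx, hss, rfl⟩
    have ha : (0:ℝ) < x - xbar := by linarith
    have hb : (0:ℝ) < s - sbar := by linarith
    set a : ℝ := x - xbar with hadef
    set b : ℝ := s - sbar with hbdef
    set u : ℝ := a ^ (1 - β) * b ^ β with hudef
    have hu : 0 < u := mul_pos (rpow_pos_of_pos ha _) (rpow_pos_of_pos hb _)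
    -- Step 1: K * u ≤ a * pp + b * ξ
    have step1 : K * u ≤ a * pp + b * ξ := by
      have amgm := Real.geom_mean_le_arith_mean2_weighted
        (w₁ := 1 - β) (w₂ := β) (p₁ := a * pp / (1 - β)) (p₂ := b * ξ / β)
        hβ'.le hβ0.le (by positivity) (by positivity) (by ring)
      have hl : (a * pp / (1 - β)) ^ (1 - β) * (b * ξ / β) ^ β = K * u := by
        rw [show a * pp / (1 - β) = a * (pp / (1 - β)) by ring,
            show b * ξ / β = b * (ξ / β) by ring,
            Real.mul_rpow ha.le (by positivity),
            Real.mul_rpow hb.le (by positivity)]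
        rw [hKdef, hudef]; ring
      have hr : (1 - β) * (a * pp / (1 - β)) + β * (b * ξ / β) = a * pp + b * ξ := by
        field_simp
      rw [hl, hr] at amgm
      exact amgm
    have h4 := step2 u hu
    have hxa : x = xbar + a := by rw [hadef]; ring
    have hsb : s = sbar + b := by rw [hbdef]; ring
    rw [hxa, hsb]
    calc u ^ (1 - γ) / (1 - γ) - (xbar + a) * pp - (sbar + b) * ξ
        = (-xbar * pp - sbar * ξ) + (u ^ (1 - γ) / (1 - γ) - (a * pp + b * ξ)) := by
          ring
      _ ≤ (-xbar * pp - sbar * ξ) + (u ^ (1 - γ) / (1 - γ) - K * u) :=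
          add_le_add_right (sub_le_sub_left step1 _) _
      _ ≤ (-xbar * pp - sbar * ξ) + γ / (1 - γ) * t := add_le_add_right h4 _
      _ = -xbar * pp - sbar * ξ + γ / (1 - γ) * t := by ring
  · -- least upper bound: the value is attained
    intro c hc
    apply hc
    refine ⟨xbar + (1 - β) * t / pp, sbar + β * t / ξ,
      lt_add_of_pos_right xbar (by positivity), lt_add_of_pos_right sbar (by positivity), ?_⟩
    have ha : xbar + (1 - β) * t / pp - xbar = ((1 - β) / pp) * t := by ring
    have hb : sbar + β * t / ξ - sbar = (β / ξ) * t := by ring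
    rw [ha, hb]
    have htt : t ^ (1 - β) * t ^ β = t := by
      rw [← Real.rpow_add ht]; norm_num
    have h1 : (((1 - β) / pp) * t) ^ (1 - β) * ((β / ξ) * t) ^ β = K⁻¹ * t := by
      rw [Real.mul_rpow (by positivity) ht.le, Real.mul_rpow (by positivity) ht.le,
          show ((1 - β) / pp : ℝ) = (pp / (1 - β))⁻¹ from (inv_div _ _).symm,
          show (β / ξ : ℝ) = (ξ / β)⁻¹ from (inv_div _ _).symm,
          Real.inv_rpow (div_pos hpp hβ').le (1 - β),
          Real.inv_rpow (div_pos hξ hβ0).le β, hKdef, mul_inv]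
      linear_combination (((pp / (1 - β)) ^ (1 - β))⁻¹ * ((ξ / β) ^ β)⁻¹) * htt
    have hKinv : K⁻¹ = K ^ (-1 : ℝ) := by
      rw [Real.rpow_neg_one]
    have hKt : K⁻¹ * t = K ^ (-(1 / γ)) := by
      rw [hKinv, htdef, ← Real.rpow_add hK]
      congr 1
      field_simp
      ring
    have h2 : (K ^ (-(1 / γ))) ^ (1 - γ) = t := by
      rw [← Real.rpow_mul hK.le, htdef]
      congr 1
      field_simp
      ring
    rw [h1, hKt, h2]
    have e3 : (xbar + (1 - β) * t / pp) * pp = xbar * pp + (1 - β) * t := by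
      field_simp
    have e4 : (sbar + β * t / ξ) * ξ = sbar * ξ + β * t := by
      field_simp
    rw [e3, e4]
    field_simp [hγne]
    ring
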